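/- Let 𝒜 = {A₁, …, A_m} be a finite nonempty set of n×n real matrices all of whose entries are nonnegative. Then ρ(A₁ + ⋯ + A_m)/m ≤ ρ(𝒜) ≤ ρ(A₁ + ⋯ + A_m), i.e. the joint spectral radius of 𝒜 lies between the spectral radius of the sum A₁ + ⋯ + A_m divided by m and the spectral radius of the sum A₁ + ⋯ + A_m. -/

import Mathlib

/-- Spectral radius of a real square matrix: the largest absolute value of its
complex eigenvalues (elements of the spectrum of the complexified matrix). -/
noncomputable def specRad {n : ℕ} (A : Matrix (Fin n) (Fin n) ℝ) : ℝ :=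
  sSup {r : ℝ | ∃ μ ∈ spectrum ℂ (A.map Complex.ofReal), r = ‖μ‖}

/-- The set 𝒜^j of all products A₁A₂⋯A_j of j matrices from 𝒜. -/
def prodSet {n : ℕ} (𝒜 : Set (Matrix (Fin n) (Fin n) ℝ)) (j : ℕ) :
    Set (Matrix (Fin n) (Fin n) ℝ) :=
  {A | ∃ f : Fin j → Matrix (Fin n) (Fin n) ℝ, (∀ i, f i ∈ 𝒜) ∧ A = (List.ofFn f).prod}

/-- Joint spectral radius: ρ(𝒜) = limsup_{j→∞} (sup_{A ∈ 𝒜^j} ρ(A))^{1/j}. -/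
noncomputable def jsr {n : ℕ} (𝒜 : Set (Matrix (Fin n) (Fin n) ℝ)) : ℝ :=
  Filter.limsup
    (fun j : ℕ => (sSup (specRad '' prodSet 𝒜 j)) ^ ((1 : ℝ) / j)) Filter.atTop


open Filter Matrix Topology

attribute [local instance] Matrix.linftyOpNormedAddCommGroup Matrix.linftyOpNormedRing
  Matrix.linftyOpNormedAlgebra

variable {n : ℕ}

instance : CompleteSpace (Matrix (Fin n) (Fin n) ℂ) := FiniteDimensional.complete ℂ _

lemma cpx_pow (M : Matrix (Fin n) (Fin n) ℝ) (k : ℕ) :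
    (M ^ k).map Complex.ofReal = (M.map Complex.ofReal) ^ k := by
  have h : ∀ P : Matrix (Fin n) (Fin n) ℝ, P.map Complex.ofReal = Complex.ofRealHom.mapMatrix P :=
    fun _ => rfl
  rw [h, h, map_pow]

lemma absSpec_bdd (M : Matrix (Fin n) (Fin n) ℝ) :
    BddAbove {r : ℝ | ∃ μ ∈ spectrum ℂ (M.map Complex.ofReal), r = ‖μ‖} := by
  have : {r : ℝ | ∃ μ ∈ spectrum ℂ (M.map Complex.ofReal), r = ‖μ‖}
      = (fun μ : ℂ => ‖μ‖) '' spectrum ℂ (M.map Complex.ofReal) := by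
    ext r; simp [eq_comm]
  rw [this]
  exact ((Matrix.finite_spectrum _).image _).bddAbove

lemma absSpec_nonempty (hn : n ≠ 0) (M : Matrix (Fin n) (Fin n) ℝ) :
    {r : ℝ | ∃ μ ∈ spectrum ℂ (M.map Complex.ofReal), r = ‖μ‖}.Nonempty := by
  haveI : Nonempty (Fin n) := ⟨⟨0, Nat.pos_of_ne_zero hn⟩⟩
  obtain ⟨μ, hμ⟩ := spectrum.nonempty (M.map Complex.ofReal)
  exact ⟨‖μ‖, μ, hμ, rfl⟩

lemma abs_le_specRad {M : Matrix (Fin n) (Fin n) ℝ} {μ : ℂ}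
    (hμ : μ ∈ spectrum ℂ (M.map Complex.ofReal)) : ‖μ‖ ≤ specRad M :=
  le_csSup (absSpec_bdd M) ⟨μ, hμ, rfl⟩

lemma specRad_mem (hn : n ≠ 0) (M : Matrix (Fin n) (Fin n) ℝ) :
    ∃ μ ∈ spectrum ℂ (M.map Complex.ofReal), specRad M = ‖μ‖ := by
  have hne : ((fun μ : ℂ => ‖μ‖) '' spectrum ℂ (M.map Complex.ofReal)).Nonempty := by
    obtain ⟨r, μ, hμ, hr⟩ := absSpec_nonempty hn M
    exact ⟨r, μ, hμ, hr.symm⟩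
  have h := hne.csSup_mem ((Matrix.finite_spectrum (M.map Complex.ofReal)).image _)
  have he : {r : ℝ | ∃ μ ∈ spectrum ℂ (M.map Complex.ofReal), r = ‖μ‖}
      = (fun μ : ℂ => ‖μ‖) '' spectrum ℂ (M.map Complex.ofReal) := by
    ext r; simp [eq_comm]
  rw [show specRad M = sSup _ from rfl, he]
  obtain ⟨μ, hμ, hμ2⟩ := h
  exact ⟨μ, hμ, hμ2.symm⟩

lemma specRad_nonneg (hn : n ≠ 0) (M : Matrix (Fin n) (Fin n) ℝ) : 0 ≤ specRad M := by
  obtain ⟨μ, _, h⟩ := specRad_mem hn M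
  rw [h]; exact norm_nonneg _

lemma specRad_eq_toReal (hn : n ≠ 0) (M : Matrix (Fin n) (Fin n) ℝ) :
    specRad M = (spectralRadius ℂ (M.map Complex.ofReal)).toReal := by
  haveI : Nonempty (Fin n) := ⟨⟨0, Nat.pos_of_ne_zero hn⟩⟩
  obtain ⟨z, hz, hz2⟩ := spectrum.exists_nnnorm_eq_spectralRadius (M.map Complex.ofReal)
  apply le_antisymm
  · apply csSup_le (absSpec_nonempty hn M)
    rintro r ⟨μ, hμ, rfl⟩
    have h1 : (‖μ‖₊ : ENNReal) ≤ spectralRadius ℂ (M.map Complex.ofReal) :=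
      le_iSup₂ (f := fun k (_ : k ∈ spectrum ℂ (M.map Complex.ofReal)) => (‖k‖₊ : ENNReal)) μ hμ
    have h2 : ‖μ‖₊ ≤ ‖z‖₊ := ENNReal.coe_le_coe.mp (h1.trans_eq hz2.symm)
    have h3 : (spectralRadius ℂ (M.map Complex.ofReal)).toReal = ‖z‖ := by
      rw [← hz2]; simp
    rw [h3]
    exact_mod_cast h2
  · rw [← hz2]
    simpa using abs_le_specRad hz

lemma gelfand (hn : n ≠ 0) (M : Matrix (Fin n) (Fin n) ℝ) :
    Tendsto (fun k : ℕ => ‖(M.map Complex.ofReal) ^ k‖ ^ ((1 : ℝ) / k)) atTop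
      (𝓝 (specRad M)) := by
  have h := spectrum.pow_norm_pow_one_div_tendsto_nhds_spectralRadius (M.map Complex.ofReal)
  have hfin : spectralRadius ℂ (M.map Complex.ofReal) ≠ ⊤ := by
    haveI : Nonempty (Fin n) := ⟨⟨0, Nat.pos_of_ne_zero hn⟩⟩
    obtain ⟨z, _, hz2⟩ := spectrum.exists_nnnorm_eq_spectralRadius (M.map Complex.ofReal)
    rw [← hz2]; exact ENNReal.coe_ne_top
  have h2 := (ENNReal.tendsto_toReal hfin).comp h
  rw [specRad_eq_toReal hn]
  convert h2 using 2 with k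
  rw [Function.comp_apply, ENNReal.toReal_ofReal]
  positivity

lemma entry_abs_norm_le {P Q : Matrix (Fin n) (Fin n) ℝ}
    (h : ∀ a b, |P a b| ≤ Q a b) :
    ‖P.map Complex.ofReal‖ ≤ ‖Q.map Complex.ofReal‖ := by
  rw [← coe_nnnorm, ← coe_nnnorm, NNReal.coe_le_coe,
    Matrix.linfty_opNNNorm_def, Matrix.linfty_opNNNorm_def]
  apply Finset.sup_le
  intro i _
  refine le_trans (Finset.sum_le_sum fun j _ => ?_)
    (Finset.le_sup (f := fun i => ∑ j, ‖(Q.map Complex.ofReal) i j‖₊) (Finset.mem_univ i))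
  have h1 : ‖(P.map Complex.ofReal) i j‖₊ = ‖P i j‖₊ := by
    simp [Matrix.map_apply]
  have h2 : ‖(Q.map Complex.ofReal) i j‖₊ = ‖Q i j‖₊ := by
    simp [Matrix.map_apply]
  rw [h1, h2, ← NNReal.coe_le_coe, coe_nnnorm, coe_nnnorm, Real.norm_eq_abs, Real.norm_eq_abs]
  calc |P i j| ≤ Q i j := h i j
    _ ≤ |Q i j| := le_abs_self _

lemma mul_entry_mono {P P' Q Q' : Matrix (Fin n) (Fin n) ℝ}
    (hP : ∀ a b, 0 ≤ P a b) (hQ : ∀ a b, 0 ≤ Q a b)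
    (hPP' : ∀ a b, P a b ≤ P' a b) (hQQ' : ∀ a b, Q a b ≤ Q' a b) :
    ∀ a b, (P * Q) a b ≤ (P' * Q') a b := by
  intro a b
  rw [Matrix.mul_apply, Matrix.mul_apply]
  apply Finset.sum_le_sum
  intro k _
  exact mul_le_mul (hPP' a k) (hQQ' k b) (hQ k b) (le_trans (hP a k) (hPP' a k))

lemma mul_entry_nonneg {P Q : Matrix (Fin n) (Fin n) ℝ}
    (hP : ∀ a b, 0 ≤ P a b) (hQ : ∀ a b, 0 ≤ Q a b) :
    ∀ a b, 0 ≤ (P * Q) a b := by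
  intro a b
  rw [Matrix.mul_apply]
  exact Finset.sum_nonneg fun k _ => mul_nonneg (hP a k) (hQ k b)

lemma pow_entry_nonneg {P : Matrix (Fin n) (Fin n) ℝ} (hP : ∀ a b, 0 ≤ P a b) (k : ℕ) :
    ∀ a b, 0 ≤ (P ^ k) a b := by
  induction k with
  | zero => intro a b; rw [pow_zero]; by_cases h : a = b <;> simp [Matrix.one_apply, h]
  | succ k ih => rw [pow_succ]; exact mul_entry_nonneg ih hP

lemma pow_entry_mono {P Q : Matrix (Fin n) (Fin n) ℝ}
    (hP : ∀ a b, 0 ≤ P a b) (hPQ : ∀ a b, P a b ≤ Q a b) (k : ℕ) :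
    ∀ a b, (P ^ k) a b ≤ (Q ^ k) a b := by
  induction k with
  | zero => intro a b; rw [pow_zero, pow_zero]
  | succ k ih => rw [pow_succ, pow_succ]; exact mul_entry_mono (pow_entry_nonneg hP k) hP ih hPQ

lemma specRad_mono (hn : n ≠ 0) {P Q : Matrix (Fin n) (Fin n) ℝ}
    (hP : ∀ a b, 0 ≤ P a b) (hPQ : ∀ a b, P a b ≤ Q a b) :
    specRad P ≤ specRad Q := by
  refine le_of_tendsto_of_tendsto' (gelfand hn P) (gelfand hn Q) fun k => ?_
  apply Real.rpow_le_rpow (norm_nonneg _) _ (by positivity)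
  rw [← cpx_pow, ← cpx_pow]
  apply entry_abs_norm_le
  intro a b
  rw [abs_of_nonneg (pow_entry_nonneg hP k a b)]
  exact pow_entry_mono hP hPQ k a b

lemma specRad_pow (hn : n ≠ 0) (M : Matrix (Fin n) (Fin n) ℝ) {j : ℕ} (hj : j ≠ 0) :
    specRad (M ^ j) = specRad M ^ j := by
  have h1 := gelfand hn (M ^ j)
  have h3 : Tendsto (fun k : ℕ => ‖(M.map Complex.ofReal) ^ (j * k)‖ ^ ((1 : ℝ) / (j * k))) atTop
      (𝓝 (specRad M)) := by
    have := (gelfand hn M).comp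
      (Filter.tendsto_atTop_mono (fun k => Nat.le_mul_of_pos_left k (Nat.pos_of_ne_zero hj))
        tendsto_id)
    convert this using 2 with k
    simp [Function.comp_apply]
  have h4 := h3.pow j
  have he : (fun k : ℕ => (‖(M.map Complex.ofReal) ^ (j * k)‖ ^ ((1 : ℝ) / (j * k))) ^ j)
      = fun k : ℕ => ‖((M ^ j).map Complex.ofReal) ^ k‖ ^ ((1 : ℝ) / k) := by
    funext k
    rw [cpx_pow, ← pow_mul, ← Real.rpow_natCast (_ ^ ((1:ℝ)/(j*k))) j, ← Real.rpow_mul (norm_nonneg _)]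
    congr 1
    rcases Nat.eq_zero_or_pos k with rfl | hk
    · simp
    · push_cast
      field_simp
  rw [he] at h4
  exact tendsto_nhds_unique h1 h4

open Module


lemma trace_pow_of_nilpotent_sub {V : Type} [AddCommGroup V] [Module ℂ V]
    [Module.Finite ℂ V] [Module.Free ℂ V] (g : Module.End ℂ V) (μ : ℂ)
    (hnil : IsNilpotent (g - algebraMap ℂ _ μ)) (k : ℕ) :
    LinearMap.trace ℂ V (g ^ k) = μ ^ k * (finrank ℂ V : ℂ) := by
  induction k with
  | zero => simp [LinearMap.trace_one]
  | succ k ih =>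
    have h : g ^ (k + 1) = (g ^ k) ∘ₗ g := by rw [← Module.End.mul_eq_comp, ← pow_succ]
    rw [h, LinearMap.trace_comp_eq_mul_of_commute_of_isNilpotent μ
      ((Commute.refl _).pow_left k) hnil, ih]
    ring

lemma trace_formula {n : ℕ} (N : Matrix (Fin n) (Fin n) ℂ) :
    ∃ (σf : Finset ℂ) (d : ℂ → ℕ),
      ((σf : Set ℂ) = spectrum ℂ N) ∧ (∀ μ ∈ σf, 1 ≤ d μ) ∧ ((∑ μ ∈ σf, d μ) = n) ∧
      ∀ k : ℕ, (N ^ k).trace = ∑ μ ∈ σf, (d μ : ℂ) * μ ^ k := by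
  classical
  set f : Module.End ℂ (Fin n → ℂ) := Matrix.toLinAlgEquiv' N with hf
  have htop : ⨆ μ, f.maxGenEigenspace μ = ⊤ := Module.End.iSup_maxGenEigenspace_eq_top f
  have hind := f.independent_maxGenEigenspace
  have hds := DirectSum.isInternal_submodule_of_iSupIndep_of_iSup_eq_top hind htop
  have h_fin : {μ | f.maxGenEigenspace μ ≠ ⊥}.Finite :=
    WellFoundedGT.finite_ne_bot_of_iSupIndep hind
  have key : ∀ k : ℕ, (N ^ k).trace
      = ∑ μ ∈ h_fin.toFinset, (finrank ℂ (f.maxGenEigenspace μ) : ℂ) * μ ^ k := by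
    intro k
    have hcomm : Commute f (f ^ k) := (Commute.refl f).pow_right k
    have hfk : ∀ μ, Set.MapsTo (f ^ k) ↑(f.maxGenEigenspace μ) ↑(f.maxGenEigenspace μ) :=
      fun μ => Module.End.mapsTo_maxGenEigenspace_of_comm hcomm μ
    have htr : (N ^ k).trace = LinearMap.trace ℂ _ ((f : Module.End ℂ (Fin n → ℂ)) ^ k) := by
      rw [LinearMap.trace_eq_matrix_trace ℂ (Pi.basisFun ℂ (Fin n)),
        LinearMap.toMatrix_eq_toMatrix']
      congr 1
      rw [hf, ← map_pow]
      exact (LinearMap.toMatrix'_toLin' _).symm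
    rw [htr, LinearMap.trace_eq_sum_trace_restrict' hds h_fin hfk]
    apply Finset.sum_congr rfl
    intro μ hμ
    have hself : ∀ x ∈ f.maxGenEigenspace μ, f x ∈ f.maxGenEigenspace μ :=
      fun x hx => Module.End.mapsTo_maxGenEigenspace_of_comm (Commute.refl f) μ hx
    have hrespow : (f ^ k).restrict (hfk μ) = (f.restrict hself) ^ k := by
      rw [Module.End.pow_restrict]
    rw [hrespow]
    have hnil : IsNilpotent (f.restrict hself - algebraMap ℂ _ μ) := by
      have h := f.isNilpotent_restrict_maxGenEigenspace_sub_algebraMap μ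
      have he : (f - algebraMap ℂ (Module.End ℂ (Fin n → ℂ)) μ).restrict
          (Module.End.mapsTo_maxGenEigenspace_of_comm (Algebra.mul_sub_algebraMap_commutes f μ) μ)
          = f.restrict hself - algebraMap ℂ _ μ := by
        ext x
        rfl
      rwa [he] at h
    rw [trace_pow_of_nilpotent_sub _ _ hnil k]
    ring
  refine ⟨h_fin.toFinset, fun μ => finrank ℂ (f.maxGenEigenspace μ), ?_, ?_, ?_, key⟩
  · -- σf = spectrum
    rw [Set.Finite.coe_toFinset]
    ext μ
    rw [Set.mem_setOf_eq, ← AlgEquiv.spectrum_eq Matrix.toLinAlgEquiv' N,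
      ← Module.End.hasEigenvalue_iff_mem_spectrum, ← hf]
    constructor
    · intro h
      rw [Module.End.maxGenEigenspace_eq] at h
      exact Module.End.hasEigenvalue_of_hasGenEigenvalue (k := Module.End.maxGenEigenspaceIndex f μ) h
    · intro h
      have h1 : f.genEigenspace μ 1 ≤ f.maxGenEigenspace μ := (f.genEigenspace μ).monotone le_top
      intro hbot
      exact h (le_bot_iff.mp (hbot ▸ h1))
  · -- d ≥ 1
    intro μ hμ
    rw [Set.Finite.mem_toFinset] at hμ
    have : Nontrivial (f.maxGenEigenspace μ) := Submodule.nontrivial_iff_ne_bot.mpr hμ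
    exact Module.finrank_pos
  · -- sum of d = n
    have h0 := key 0
    simp only [pow_zero, mul_one, Matrix.trace_one] at h0
    have : ((n : ℕ) : ℂ) = ((∑ μ ∈ h_fin.toFinset, finrank ℂ (f.maxGenEigenspace μ) : ℕ) : ℂ) := by
      push_cast
      simpa using h0
    exact_mod_cast this.symm


section WordSec
variable {n m : ℕ} (A : Fin m → Matrix (Fin n) (Fin n) ℝ)

def wordProd (j : ℕ) (g : Fin j → Fin m) : Matrix (Fin n) (Fin n) ℝ :=
  (List.ofFn (fun i => A (g i))).prod

lemma prodSet_range_eq (j : ℕ) : prodSet (Set.range A) j = Set.range (wordProd A j) := by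
  ext P
  constructor
  · rintro ⟨f, hf, rfl⟩
    choose g hg using hf
    exact ⟨g, by simp [wordProd, funext hg]⟩
  · rintro ⟨g, rfl⟩
    exact ⟨fun i => A (g i), fun i => ⟨g i, rfl⟩, rfl⟩

lemma wordProd_succ (j : ℕ) (g : Fin (j + 1) → Fin m) :
    wordProd A (j + 1) g = A (g 0) * wordProd A j (fun i => g i.succ) := by
  simp [wordProd, List.ofFn_succ]

variable (hA : ∀ i, ∀ a b, 0 ≤ A i a b)
include hA

lemma wordProd_nonneg (j : ℕ) (g : Fin j → Fin m) : ∀ a b, 0 ≤ wordProd A j g a b := by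
  induction j with
  | zero =>
    intro a b
    show (0:ℝ) ≤ (1 : Matrix (Fin n) (Fin n) ℝ) a b
    by_cases h : a = b <;> simp [Matrix.one_apply, h]
  | succ j ih =>
    rw [wordProd_succ]
    exact mul_entry_nonneg (hA _) (ih _)

lemma entry_le_sum (i : Fin m) : ∀ a b, A i a b ≤ (∑ i', A i') a b := by
  intro a b
  rw [Matrix.sum_apply]
  exact Finset.single_le_sum (fun i' _ => hA i' a b) (Finset.mem_univ i)

lemma sum_entry_nonneg : ∀ a b, 0 ≤ (∑ i', A i') a b := by
  intro a b
  rw [Matrix.sum_apply]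
  exact Finset.sum_nonneg fun i _ => hA i a b

lemma wordProd_le_pow (j : ℕ) (g : Fin j → Fin m) :
    ∀ a b, wordProd A j g a b ≤ ((∑ i', A i') ^ j) a b := by
  induction j with
  | zero => intro a b; rw [pow_zero]; exact le_refl _
  | succ j ih =>
    rw [wordProd_succ, pow_succ']
    exact mul_entry_mono (hA _) (wordProd_nonneg A hA j _)
      (entry_le_sum A hA (g 0)) (ih _)

lemma sum_pow_eq_sum_words (j : ℕ) :
    (∑ i', A i') ^ j = ∑ g : Fin j → Fin m, wordProd A j g := by
  induction j with
  | zero =>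
    rw [pow_zero, Fintype.sum_unique]
    symm
    simp [wordProd]
  | succ j ih =>
    rw [pow_succ', ih, Finset.sum_mul_sum, ← Fintype.sum_prod_type']
    apply Fintype.sum_equiv (Fin.consEquiv (fun _ => Fin m))
    rintro ⟨i, g⟩
    show A i * wordProd A j g = wordProd A (j + 1) (Fin.cons i g)
    rw [wordProd_succ, Fin.cons_zero]
    have : (fun t : Fin j => Fin.cons (α := fun _ => Fin m) i g t.succ) = g := by
      funext t
      simp
    rw [this]

end WordSec
section E
open Complex in
lemma trace_cpx {n : ℕ} (M : Matrix (Fin n) (Fin n) ℝ) :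
    (M.map Complex.ofReal).trace = (M.trace : ℂ) := by
  simp [Matrix.trace, Matrix.diag, Matrix.map_apply]

lemma trace_nonneg_of_nonneg {n : ℕ} {P : Matrix (Fin n) (Fin n) ℝ}
    (hP : ∀ a b, 0 ≤ P a b) : 0 ≤ P.trace :=
  Finset.sum_nonneg fun i _ => hP i i

lemma trace_le_card_mul_specRad {n : ℕ} (hn : n ≠ 0) {P : Matrix (Fin n) (Fin n) ℝ} :
    P.trace ≤ n * specRad P := by
  obtain ⟨σf, d, hσ, hd1, hdsum, hkey⟩ := trace_formula (P.map Complex.ofReal)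
  have h1 := hkey 1
  rw [pow_one, trace_cpx] at h1
  have h2 : P.trace ≤ ‖(P.trace : ℂ)‖ := by
    rw [Complex.norm_real, Real.norm_eq_abs]
    exact le_abs_self _
  have h3 : ‖(P.trace : ℂ)‖ ≤ ∑ μ ∈ σf, (d μ : ℝ) * ‖μ‖ := by
    rw [h1]
    refine le_trans (norm_sum_le _ _) ?_
    apply Finset.sum_le_sum
    intro μ hμ
    simp [_root_.map_mul, Complex.norm_natCast]
  have h4 : ∀ μ ∈ σf, ‖μ‖ ≤ specRad P := by
    intro μ hμ
    refine abs_le_specRad (M := P) ?_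
    rw [← hσ]
    exact_mod_cast hμ
  calc P.trace ≤ ‖(P.trace : ℂ)‖ := h2
    _ ≤ ∑ μ ∈ σf, (d μ : ℝ) * ‖μ‖ := h3
    _ ≤ ∑ μ ∈ σf, (d μ : ℝ) * specRad P := by
        refine Finset.sum_le_sum fun μ hμ => ?_
        exact mul_le_mul_of_nonneg_left (h4 μ hμ) (by positivity)
    _ = (∑ μ ∈ σf, (d μ : ℝ)) * specRad P := by rw [← Finset.sum_mul]
    _ = n * specRad P := by
        congr 1
        rw [← hdsum]
        push_cast
        rfl

end E


/-- For a finite nonempty family A₁, …, A_m of matrices with nonnegative entries,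
ρ(A₁ + ⋯ + A_m)/m ≤ ρ({A₁, …, A_m}) ≤ ρ(A₁ + ⋯ + A_m). -/
theorem jsr_nonneg_entries_bounds_general {n m : ℕ} (hm : 0 < m)
    (A : Fin m → Matrix (Fin n) (Fin n) ℝ)
    (hA : ∀ i, ∀ a b, 0 ≤ A i a b) :
    specRad (∑ i, A i) / m ≤ jsr (Set.range A) ∧
    jsr (Set.range A) ≤ specRad (∑ i, A i) := by
  classical
  haveI : Nonempty (Fin m) := ⟨⟨0, hm⟩⟩
  set S : Matrix (Fin n) (Fin n) ℝ := ∑ i, A i with hS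
  set u : ℕ → ℝ :=
    fun j => (sSup (specRad '' prodSet (Set.range A) j)) ^ ((1 : ℝ) / j) with hu
  have hjsr : jsr (Set.range A) = Filter.limsup u Filter.atTop := rfl
  set F : ℕ → ℝ := fun j => sSup (specRad '' prodSet (Set.range A) j) with hF
  have himg : ∀ j, specRad '' prodSet (Set.range A) j
      = Set.range (fun g : Fin j → Fin m => specRad (wordProd A j g)) := by
    intro j
    rw [prodSet_range_eq]
    exact (Set.range_comp _ _).symm
  have hbdd : ∀ j, BddAbove (specRad '' prodSet (Set.range A) j) := fun j => by
    rw [himg]; exact (Set.finite_range _).bddAbove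
  have hne : ∀ j, (specRad '' prodSet (Set.range A) j).Nonempty := fun j => by
    rw [himg]; exact Set.range_nonempty _
  have hle : ∀ j (g : Fin j → Fin m), specRad (wordProd A j g) ≤ F j := fun j g =>
    le_csSup (hbdd j) (by rw [himg]; exact ⟨g, rfl⟩)
  by_cases hn : n = 0
  · subst hn
    have hzero : ∀ M : Matrix (Fin 0) (Fin 0) ℝ, specRad M = 0 := by
      intro M
      have h : {r : ℝ | ∃ μ ∈ spectrum ℂ (M.map Complex.ofReal), r = ‖μ‖} = ∅ := by
        ext r
        simp only [Set.mem_setOf_eq, Set.mem_empty_iff_false, iff_false, not_exists]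
        rintro μ ⟨hμ, _⟩
        exact (spectrum.mem_iff.mp hμ) (isUnit_of_subsingleton _)
      rw [specRad, h, Real.sSup_empty]
    have hF0 : ∀ j, F j = 0 := by
      intro j
      have h : specRad '' prodSet (Set.range A) j = {0} := by
        rw [Set.eq_singleton_iff_nonempty_unique_mem]
        refine ⟨hne j, ?_⟩
        rintro x ⟨P, _, rfl⟩
        exact hzero P
      rw [hF]
      simp only
      rw [h, csSup_singleton]
    have hu0 : ∀ j, 0 ≤ u j := fun j => Real.rpow_nonneg (le_of_eq (hF0 j).symm) _
    have hu1 : ∀ j, 1 ≤ j → u j ≤ 0 := by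
      intro j hj
      have h0 : u j = (0:ℝ) ^ ((1:ℝ)/j) := by rw [hu]; simp only; rw [← hF0 j]
      have hj' : ((1:ℝ)/(j:ℝ)) ≠ 0 :=
        one_div_ne_zero (by exact_mod_cast Nat.one_le_iff_ne_zero.mp hj)
      rw [h0, Real.zero_rpow hj']
    have hub : ∀ j, u j ≤ 1 := by
      intro j
      rcases Nat.eq_zero_or_pos j with rfl | hj
      · have : u 0 = 1 := by
          rw [hu]; simp only [Nat.cast_zero, div_zero, Real.rpow_zero]
        rw [this]
      · exact le_trans (hu1 j hj) zero_le_one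
    have hbddAbove : Filter.IsBoundedUnder (· ≤ ·) Filter.atTop u :=
      Filter.isBoundedUnder_of ⟨1, hub⟩
    have hbddBelow : Filter.IsBoundedUnder (· ≥ ·) Filter.atTop u :=
      Filter.isBoundedUnder_of ⟨0, hu0⟩
    constructor
    · rw [hzero S, zero_div, hjsr]
      exact Filter.le_limsup_of_frequently_le (Filter.Frequently.of_forall hu0) hbddAbove
    · rw [hjsr, hzero S]
      exact Filter.limsup_le_of_le hbddBelow.isCoboundedUnder_le
        (Filter.eventually_atTop.mpr ⟨1, hu1⟩)
  · -- main case n ≠ 0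
    set ρ := specRad S with hρ
    have hρ0 : 0 ≤ ρ := specRad_nonneg hn S
    have hF0 : ∀ j, 0 ≤ F j := by
      intro j
      have g0 : Fin j → Fin m := fun _ => Classical.arbitrary _
      exact le_trans (specRad_nonneg hn _) (hle j g0)
    have hu0 : ∀ j, 0 ≤ u j := fun j => Real.rpow_nonneg (hF0 j) _
    have hFρ : ∀ j, j ≠ 0 → F j ≤ ρ ^ j := by
      intro j hj
      apply csSup_le (hne j)
      rw [himg j]
      rintro r ⟨g, rfl⟩
      calc specRad (wordProd A j g)
          ≤ specRad (S ^ j) :=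
            specRad_mono hn (wordProd_nonneg A hA j g) (wordProd_le_pow A hA j g)
        _ = ρ ^ j := specRad_pow hn S hj
    have huρ : ∀ j, j ≠ 0 → u j ≤ ρ := by
      intro j hj
      have h1 : u j ≤ (ρ ^ j) ^ ((1:ℝ)/j) :=
        Real.rpow_le_rpow (hF0 j) (hFρ j hj) (by positivity)
      have h2 : (ρ ^ j) ^ ((1:ℝ)/j) = ρ := by
        rw [← Real.rpow_natCast ρ j, ← Real.rpow_mul hρ0, mul_one_div,
          div_self (by exact_mod_cast hj : (j:ℝ) ≠ 0), Real.rpow_one]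
      rwa [h2] at h1
    have hbddAbove : Filter.IsBoundedUnder (· ≤ ·) Filter.atTop u := by
      refine Filter.isBoundedUnder_of ⟨max ρ 1, fun j => ?_⟩
      rcases Nat.eq_zero_or_pos j with rfl | hj
      · have : u 0 = 1 := by
          rw [hu]; simp only [Nat.cast_zero, div_zero, Real.rpow_zero]
        rw [this]; exact le_max_right _ _
      · exact le_trans (huρ j (Nat.one_le_iff_ne_zero.mp hj)) (le_max_left _ _)
    have hbddBelow : Filter.IsBoundedUnder (· ≥ ·) Filter.atTop u :=
      Filter.isBoundedUnder_of ⟨0, hu0⟩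
    have hL0 : 0 ≤ Filter.limsup u Filter.atTop :=
      Filter.le_limsup_of_frequently_le (Filter.Frequently.of_forall hu0) hbddAbove
    refine ⟨?_, ?_⟩
    swap
    · rw [hjsr]
      exact Filter.limsup_le_of_le hbddBelow.isCoboundedUnder_le
        (Filter.eventually_atTop.mpr ⟨1, fun j hj => huρ j (Nat.one_le_iff_ne_zero.mp hj)⟩)
    · rw [hjsr]
      rcases le_or_gt ρ 0 with hρneg | hρpos
      · refine le_trans ?_ hL0
        have hmR : (0:ℝ) < m := by exact_mod_cast hm
        exact div_nonpos_of_nonpos_of_nonneg hρneg hmR.le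
      · by_contra hcon
        push_neg at hcon
        set L := Filter.limsup u Filter.atTop with hL
        set q : ℝ := (L + ρ / m) / 2 with hq
        have hmR : (0:ℝ) < m := by exact_mod_cast hm
        have hLq : L < q := by rw [hq]; linarith
        have hqρ : q < ρ / m := by rw [hq]; linarith
        have hq0 : 0 < q := by linarith
        obtain ⟨J, hJ⟩ := Filter.eventually_atTop.mp
          (Filter.eventually_lt_of_limsup_lt hLq hbddAbove)
        have hFq : ∀ j, J ≤ j → 1 ≤ j → F j ≤ q ^ j := by
          intro j hj1 hj2
          have hFu : F j = u j ^ j := by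
            rw [hu]
            simp only
            rw [← Real.rpow_natCast (F j ^ ((1:ℝ)/j)) j, ← Real.rpow_mul (hF0 j),
              one_div_mul_cancel (by exact_mod_cast Nat.one_le_iff_ne_zero.mp hj2 : (j:ℝ) ≠ 0),
              Real.rpow_one]
          rw [hFu]
          exact pow_le_pow_left₀ (hu0 j) (le_of_lt (hJ j hj1)) j
        have htr : ∀ j, J ≤ j → 1 ≤ j → (S ^ j).trace ≤ (n : ℝ) * (m * q) ^ j := by
          intro j hj1 hj2
          rw [hS, sum_pow_eq_sum_words A hA j, Matrix.trace_sum]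
          have hcard : Fintype.card (Fin j → Fin m) = m ^ j := by
            rw [Fintype.card_fun]; simp
          calc ∑ g : Fin j → Fin m, (wordProd A j g).trace
              ≤ ∑ _g : Fin j → Fin m, (n : ℝ) * q ^ j := by
                refine Finset.sum_le_sum fun g _ => ?_
                calc (wordProd A j g).trace
                    ≤ n * specRad (wordProd A j g) := trace_le_card_mul_specRad hn
                  _ ≤ n * F j := by
                      refine mul_le_mul_of_nonneg_left (hle j g) (by positivity)
                  _ ≤ n * q ^ j := by
                      refine mul_le_mul_of_nonneg_left (hFq j hj1 hj2) (by positivity)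
            _ = (m:ℝ) ^ j * ((n:ℝ) * q ^ j) := by
                rw [Finset.sum_const, Finset.card_univ, hcard, nsmul_eq_mul]
                push_cast
                ring
            _ = (n : ℝ) * (m * q) ^ j := by rw [mul_pow]; ring
        obtain ⟨σf, d, hσ, hd1, hdsum, hkey⟩ := trace_formula (S.map Complex.ofReal)
        obtain ⟨μ₁, hμ₁, hρμ⟩ := specRad_mem hn S
        have hμ₁f : μ₁ ∈ σf := by rw [← Finset.mem_coe, hσ]; exact hμ₁
        set r : ℂ → ℂ := fun x => if x = μ₁ then 1 else 0 with hr
        set P : Polynomial ℂ := Lagrange.interpolate σf id r with hPdef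
        set s' : ℕ := P.natDegree + 1 with hs'
        have heval : ∀ μ ∈ σf, P.eval μ = r μ := fun μ hμ =>
          Lagrange.eval_interpolate_at_node r (Set.injOn_id _) hμ
        have hevals : ∀ μ : ℂ, P.eval μ = ∑ t ∈ Finset.range s', P.coeff t * μ ^ t :=
          fun μ => Polynomial.eval_eq_sum_range' (Nat.lt_succ_self _) μ
        have hcomb : ∀ k : ℕ, (d μ₁ : ℂ) * μ₁ ^ k
            = ∑ t ∈ Finset.range s', P.coeff t * (((S ^ (k + t)).trace : ℝ) : ℂ) := by
          intro k
          have h1 : ∀ t : ℕ, (((S ^ (k+t)).trace : ℝ) : ℂ) = ∑ μ ∈ σf, (d μ : ℂ) * μ ^ (k+t) := by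
            intro t
            rw [← trace_cpx, cpx_pow]
            exact hkey (k+t)
          calc (d μ₁ : ℂ) * μ₁ ^ k
              = ∑ μ ∈ σf, (d μ : ℂ) * μ ^ k * r μ := by
                rw [hr]
                simp only [mul_ite, mul_one, mul_zero]
                rw [Finset.sum_ite_eq' σf μ₁ (fun μ => (d μ : ℂ) * μ ^ k)]
                simp [hμ₁f]
            _ = ∑ μ ∈ σf, (d μ : ℂ) * μ ^ k * P.eval μ := by
                refine Finset.sum_congr rfl fun μ hμ => ?_
                rw [heval μ hμ]
            _ = ∑ μ ∈ σf, ∑ t ∈ Finset.range s', P.coeff t * ((d μ : ℂ) * μ ^ (k + t)) := by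
                refine Finset.sum_congr rfl fun μ hμ => ?_
                rw [hevals μ, Finset.mul_sum]
                refine Finset.sum_congr rfl fun t ht => ?_
                rw [pow_add]
                ring
            _ = ∑ t ∈ Finset.range s', P.coeff t * (((S ^ (k+t)).trace : ℝ) : ℂ) := by
                rw [Finset.sum_comm]
                refine Finset.sum_congr rfl fun t ht => ?_
                rw [h1 t, Finset.mul_sum]
        set c0 : ℝ := ∑ t ∈ Finset.range s', ‖P.coeff t‖ * ((n:ℝ) * (m*q)^t)
          with hc0
        have hkk : ∀ k, max J 1 ≤ k → ρ ^ k ≤ c0 * (m*q)^k := by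
          intro k hk
          have hkJ : J ≤ k := le_trans (le_max_left _ _) hk
          have hk1 : 1 ≤ k := le_trans (le_max_right _ _) hk
          have hd₁ : (1:ℝ) ≤ (d μ₁ : ℝ) := by exact_mod_cast hd1 μ₁ hμ₁f
          have h2 : ρ ^ k ≤ (d μ₁ : ℝ) * ρ ^ k :=
            le_mul_of_one_le_left (pow_nonneg hρ0 k) hd₁
          have h3 : (d μ₁ : ℝ) * ρ ^ k = ‖(d μ₁ : ℂ) * μ₁ ^ k‖ := by
            rw [norm_mul, norm_pow, Complex.norm_natCast, ← hρμ]
          have h4 : ‖(d μ₁:ℂ) * μ₁ ^ k‖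
              ≤ ∑ t ∈ Finset.range s', ‖P.coeff t‖ * (S^(k+t)).trace := by
            rw [hcomb k]
            refine le_trans (norm_sum_le _ _) (Finset.sum_le_sum fun t _ => ?_)
            rw [norm_mul, Complex.norm_real, Real.norm_eq_abs,
              abs_of_nonneg (trace_nonneg_of_nonneg (pow_entry_nonneg (sum_entry_nonneg A hA) _))]
          have h5 : ∑ t ∈ Finset.range s', ‖P.coeff t‖ * (S^(k+t)).trace
              ≤ ∑ t ∈ Finset.range s', ‖P.coeff t‖ * ((n:ℝ) * (m*q)^(k+t)) := by
            refine Finset.sum_le_sum fun t _ => ?_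
            refine mul_le_mul_of_nonneg_left
              (htr (k+t) (le_trans hkJ (Nat.le_add_right _ _)) (le_trans hk1 (Nat.le_add_right _ _)))
              (norm_nonneg _)
          have h6 : ∑ t ∈ Finset.range s', ‖P.coeff t‖ * ((n:ℝ) * (m*q)^(k+t))
              = c0 * (m*q)^k := by
            rw [hc0, Finset.sum_mul]
            refine Finset.sum_congr rfl fun t _ => ?_
            rw [pow_add]
            ring
          calc ρ ^ k ≤ (d μ₁ : ℝ) * ρ ^ k := h2
            _ = ‖(d μ₁ : ℂ) * μ₁ ^ k‖ := h3
            _ ≤ _ := h4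
            _ ≤ _ := h5
            _ = c0 * (m*q)^k := h6
        have hmq0 : (0:ℝ) < m * q := by positivity
        have hmqρ : (m:ℝ) * q < ρ := by
          have := (lt_div_iff₀ hmR).mp hqρ
          linarith
        have hratio : 1 < ρ / ((m:ℝ)*q) := (one_lt_div hmq0).mpr hmqρ
        obtain ⟨k, hk2, hk1⟩ :=
          (((tendsto_pow_atTop_atTop_of_one_lt hratio).eventually_gt_atTop c0).and
            (Filter.eventually_ge_atTop (max J 1))).exists
        have hfinal := hkk k hk1
        have hlt : c0 * ((m:ℝ)*q)^k < (ρ/((m:ℝ)*q))^k * ((m:ℝ)*q)^k :=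
          mul_lt_mul_of_pos_right hk2 (pow_pos hmq0 k)
        rw [div_pow, div_mul_cancel₀ _ (ne_of_gt (pow_pos hmq0 k))] at hlt
        linarith
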